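/- Fix real numbers λ > 0, b, k, L > 0 and a nonzero real number a, and let σ ∈ ℂ satisfy (λ+1)²σ² ≠ 4λab. Then the following are equivalent: (i) there exist differentiable functions f, g : ℝ → ℂ, not both identically zero on [0,L], satisfying σ·f(x) + f'(x) + a·g(x) = 0 and σ·g(x) − λ·g'(x) + b·f(x) = 0 for all x ∈ [0,L], together with f(L) = g(L) and f(0) = k·g(0); (ii) F_{a,b,λ,k,L}(σ) = 0. -/

import Mathlib

/-- The branch `η(σ)` of the square root of `((λ+1)²σ² − 4λab)/(4λ²)` given by the principal
complex power; its square is always `((λ+1)²σ² − 4λab)/(4λ²)`. -/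
noncomputable def charEta (lam a b : ℝ) (σ : ℂ) : ℂ :=
  ((((lam : ℂ) + 1) ^ 2 * σ ^ 2 - 4 * (lam : ℂ) * a * b) / (4 * (lam : ℂ) ^ 2)) ^ ((1 : ℂ) / 2)

open Classical in
/-- The characteristic function `F_{a,b,λ,k,L}(σ) = (k−1)cosh(ηL) −
((k+1)((λ+1)/(2λ))σ + (kb/λ + a))·sinh(ηL)/η`, with `sinh(ηL)/η` interpreted as `L` when
`η = 0`.  The value does not depend on the choice of the square root `η`. -/
noncomputable def Fchar (lam a b k L : ℝ) (σ : ℂ) : ℂ :=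
  ((k : ℂ) - 1) * Complex.cosh (charEta lam a b σ * L) -
    (((k : ℂ) + 1) * (((lam : ℂ) + 1) / (2 * (lam : ℂ))) * σ + ((k : ℂ) * b / lam + a)) *
      (if charEta lam a b σ = 0 then (L : ℂ)
       else Complex.sinh (charEta lam a b σ * L) / charEta lam a b σ)

lemma hasDerivAt_cexp_real (c : ℂ) (x : ℝ) :
    HasDerivAt (fun t : ℝ => Complex.exp (c * t)) (c * Complex.exp (c * x)) x := by
  have h1 : HasDerivAt (fun t : ℂ => Complex.exp (c * t)) (c * Complex.exp (c * x)) (x : ℂ) := by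
    simpa [mul_comm] using ((hasDerivAt_id (x : ℂ)).const_mul c).cexp
  exact h1.comp_ofReal

lemma const_on_of_deriv (φ : ℝ → ℂ) (L : ℝ) (hc : Continuous φ)
    (hφ : ∀ x ∈ Set.Icc (0:ℝ) L, HasDerivAt φ 0 x) :
    ∀ x ∈ Set.Icc (0:ℝ) L, φ x = φ 0 := fun x hx =>
  constant_of_has_deriv_right_zero hc.continuousOn
    (fun y hy => (hφ y ⟨hy.1, hy.2.le⟩).hasDerivWithinAt) x hx

lemma det_identity (lam a b k σ η Q X Y Z F G : ℂ) (hlc : lam ≠ 0) (hη : η ≠ 0)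
    (hη2' : 4*lam^2*η^2 = (lam+1)^2*σ^2 - 4*lam*a*b)
    (hQ : 2*Q = σ*(1+lam))
    (hG : G = (k+1)*((lam+1)/(2*lam))*σ + (k*b/lam + a))
    (hF : F = (k-1)*((X+Y)/2) - G*(((X-Y)/2)/η)) :
    ((a*lam+k*Q)-k*lam*η)*((a*lam+Q)+lam*η)*(Z*X) - ((a*lam+k*Q)+k*lam*η)*((a*lam+Q)-lam*η)*(Z*Y)
      = -2*a*lam^2*η*Z*F := by
  have hGl : lam * G = (k+1)*(lam+1)*σ/2 + k*b + a*lam := by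
    rw [hG]; field_simp; ring
  have hF2 : 2*lam*η*F = lam*η*(k-1)*(X+Y) - ((k+1)*(lam+1)*σ/2 + k*b + a*lam)*(X-Y) := by
    rw [hF]; field_simp
    linear_combination (-2*(X - Y)) * hGl
  linear_combination (a*lam*Z) * hF2 + (-(k*Z*(X-Y))/4) * hη2'
    + (a*lam*(k+1)*Z*(X-Y)/2 + k*Z*(X-Y)*(2*Q + σ*(1+lam))/4) * hQ

/-- For `λ > 0`, `L > 0`, `a ≠ 0` and `(λ+1)²σ² ≠ 4λab`, the eigenvalue problem
with boundary conditions `f(L) = g(L)`, `f(0) = k·g(0)` has a nontrivial solution on `[0,L]`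
if and only if `F_{a,b,λ,k,L}(σ) = 0`. -/
theorem stmt_3 (lam b k L : ℝ) (hlam : 0 < lam) (hL : 0 < L) (a : ℝ) (ha : a ≠ 0)
    (σ : ℂ) (hσ : ((lam : ℂ) + 1) ^ 2 * σ ^ 2 ≠ 4 * (lam : ℂ) * a * b) :
    (∃ f g : ℝ → ℂ, Differentiable ℝ f ∧ Differentiable ℝ g ∧
        ¬(∀ x ∈ Set.Icc (0 : ℝ) L, f x = 0 ∧ g x = 0) ∧
        (∀ x ∈ Set.Icc (0 : ℝ) L,
          σ * f x + deriv f x + (a : ℂ) * g x = 0 ∧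
          σ * g x - (lam : ℂ) * deriv g x + (b : ℂ) * f x = 0) ∧
        f L = g L ∧ f 0 = (k : ℂ) * g 0) ↔
      Fchar lam a b k L σ = 0 := by
  have hlc : (lam:ℂ) ≠ 0 := Complex.ofReal_ne_zero.2 hlam.ne'
  have hac : (a:ℂ) ≠ 0 := Complex.ofReal_ne_zero.2 ha
  set η : ℂ := charEta lam a b σ with hηdef
  have hz : (((lam:ℂ)+1)^2*σ^2 - 4*(lam:ℂ)*a*b) / (4*(lam:ℂ)^2) ≠ 0 :=
    div_ne_zero (sub_ne_zero.2 hσ) (mul_ne_zero (by norm_num) (pow_ne_zero _ hlc))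
  have hη2 : η^2 = (((lam:ℂ)+1)^2*σ^2 - 4*(lam:ℂ)*a*b) / (4*(lam:ℂ)^2) := by
    rw [hηdef, charEta, sq, ← Complex.cpow_add _ _ hz]
    norm_num
  have hηne : η ≠ 0 := by
    intro h
    rw [h] at hη2
    exact hz (by simpa using hη2.symm)
  have hη2' : 4*(lam:ℂ)^2*η^2 = ((lam:ℂ)+1)^2*σ^2 - 4*(lam:ℂ)*a*b := by
    rw [hη2]; field_simp
  set s : ℂ := σ*(1-(lam:ℂ))/(2*(lam:ℂ)) with hs
  have hs' : 2*(lam:ℂ)*s = σ*(1-(lam:ℂ)) := by rw [hs]; field_simp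
  set μ₁ : ℂ := s + η with hμ1
  set μ₂ : ℂ := s - η with hμ2
  have hcp1 : (lam:ℂ)*μ₁^2 - σ*(1-(lam:ℂ))*μ₁ + ((a:ℂ)*b - σ^2) = 0 := by
    rw [hμ1]
    have h : 4*(lam:ℂ)*((lam:ℂ)*(s+η)^2 - σ*(1-(lam:ℂ))*(s+η) + ((a:ℂ)*b - σ^2)) = 0 := by
      linear_combination hη2' + (2*(lam:ℂ)*s + 4*(lam:ℂ)*η - σ*(1-(lam:ℂ))) * hs'
    rcases mul_eq_zero.mp h with h' | h'
    · exact absurd h' (by simp [hlc])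
    · exact h'
  have hcp2 : (lam:ℂ)*μ₂^2 - σ*(1-(lam:ℂ))*μ₂ + ((a:ℂ)*b - σ^2) = 0 := by
    rw [hμ2]
    have h : 4*(lam:ℂ)*((lam:ℂ)*(s-η)^2 - σ*(1-(lam:ℂ))*(s-η) + ((a:ℂ)*b - σ^2)) = 0 := by
      linear_combination hη2' + (2*(lam:ℂ)*s - 4*(lam:ℂ)*η - σ*(1-(lam:ℂ))) * hs'
    rcases mul_eq_zero.mp h with h' | h'
    · exact absurd h' (by simp [hlc])
    · exact h'
  -- abbreviations for the boundary coefficients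
  set Q : ℂ := σ*(1+(lam:ℂ))/2 with hQdef
  have hQ : 2*Q = σ*(1+(lam:ℂ)) := by rw [hQdef]; ring
  have hQ1 : σ - (lam:ℂ)*μ₁ = Q - (lam:ℂ)*η := by
    rw [hμ1]; linear_combination (-1/2 : ℂ) * hs' + (-1/2 : ℂ) * hQ
  have hQ2 : σ - (lam:ℂ)*μ₂ = Q + (lam:ℂ)*η := by
    rw [hμ2]; linear_combination (-1/2 : ℂ) * hs' + (-1/2 : ℂ) * hQ
  -- the determinant identity, specialised
  have hdet : (((a:ℂ)*lam+k*Q)-k*(lam:ℂ)*η)*(((a:ℂ)*lam+Q)+(lam:ℂ)*η)*Complex.exp (μ₁*L)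
      - (((a:ℂ)*lam+k*Q)+k*(lam:ℂ)*η)*(((a:ℂ)*lam+Q)-(lam:ℂ)*η)*Complex.exp (μ₂*L)
      = -2*(a:ℂ)*(lam:ℂ)^2*η*Complex.exp (s*L) * Fchar lam a b k L σ := by
    have h1 : Complex.exp (μ₁*L) = Complex.exp (s*L) * Complex.exp (η*L) := by
      rw [← Complex.exp_add, hμ1]; ring_nf
    have h2 : Complex.exp (μ₂*L) = Complex.exp (s*L) * Complex.exp (-(η*L)) := by
      rw [← Complex.exp_add, hμ2]; ring_nf
    rw [h1, h2]
    exact det_identity (lam:ℂ) (a:ℂ) (b:ℂ) (k:ℂ) σ η Q (Complex.exp (η*L))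
      (Complex.exp (-(η*L))) (Complex.exp (s*L)) (Fchar lam a b k L σ)
      (((k:ℂ)+1)*(((lam:ℂ)+1)/(2*(lam:ℂ)))*σ + ((k:ℂ)*b/lam + a)) hlc hηne hη2' hQ rfl
      (by rw [Fchar, if_neg hηne]; simp only [← hηdef, Complex.cosh, Complex.sinh])
  
  have hexpinv : ∀ (μ : ℂ) (x : ℝ), Complex.exp (-μ*x) * Complex.exp (μ*x) = 1 := by
    intro μ x
    rw [← Complex.exp_add, show -μ*(x:ℂ) + μ*x = 0 by ring, Complex.exp_zero]
  clear_value η s μ₁ μ₂ Q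
  constructor
  · rintro ⟨f, g, hf, hg, hnt, hode, hbL, hb0⟩
    have key : ∀ μ : ℂ, ((lam:ℂ)*μ^2 - σ*(1-(lam:ℂ))*μ + ((a:ℂ)*b - σ^2) = 0) →
        ∀ x ∈ Set.Icc (0:ℝ) L, (σ - (lam:ℂ)*μ) * f x + (a:ℂ)*(lam:ℂ) * g x
          = ((σ - (lam:ℂ)*μ) * f 0 + (a:ℂ)*(lam:ℂ) * g 0) * Complex.exp (μ * x) := by
      intro μ hμ x hx
      set φ : ℝ → ℂ :=
        fun y => Complex.exp (-μ * y) * ((σ - (lam:ℂ)*μ) * f y + (a:ℂ)*(lam:ℂ) * g y) with hφ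
      have hφd : ∀ y ∈ Set.Icc (0:ℝ) L, HasDerivAt φ 0 y := by
        intro y hy
        obtain ⟨e1, e2⟩ := hode y hy
        have hd := (hasDerivAt_cexp_real (-μ) y).mul
          (((hf y).hasDerivAt.const_mul (σ - (lam:ℂ)*μ)).add
            ((hg y).hasDerivAt.const_mul ((a:ℂ)*(lam:ℂ))))
        refine hd.congr_deriv ?_
        simp only [Pi.add_apply]
        linear_combination (Complex.exp (-μ*y)) *
          ((σ - (lam:ℂ)*μ) * e1 - (a:ℂ) * e2 + f y * hμ)
      have hcont : Continuous φ := by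
        apply Continuous.mul
        · exact Complex.continuous_exp.comp (continuous_const.mul Complex.continuous_ofReal)
        · exact (continuous_const.mul hf.continuous).add (continuous_const.mul hg.continuous)
      have hconst := const_on_of_deriv φ L hcont hφd x hx
      simp only [hφ] at hconst
      rw [Complex.ofReal_zero, mul_zero, Complex.exp_zero, one_mul] at hconst
      linear_combination Complex.exp (μ*(x:ℂ)) * hconst +
        (-((σ - (lam:ℂ)*μ) * f x + (a:ℂ)*(lam:ℂ) * g x)) * hexpinv μ x
    have k1 := key μ₁ hcp1
    have k2 := key μ₂ hcp2
    have hker : ((σ - (lam:ℂ)*μ₁) * f 0 + (a:ℂ)*(lam:ℂ) * g 0 = 0) →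
        ((σ - (lam:ℂ)*μ₂) * f 0 + (a:ℂ)*(lam:ℂ) * g 0 = 0) → False := by
      intro hc1 hc2
      apply hnt
      intro x hx
      have w1 := k1 x hx; rw [hc1, zero_mul] at w1
      have w2 := k2 x hx; rw [hc2, zero_mul] at w2
      have hfx : f x = 0 := by
        have h2 : (2*(lam:ℂ)*η) * f x = 0 := by
          linear_combination w2 - w1 - ((lam:ℂ) * f x) * hμ1 + ((lam:ℂ) * f x) * hμ2
        rcases mul_eq_zero.mp h2 with h' | h'
        · exact absurd h' (by simp [hlc, hηne])
        · exact h'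
      have hgx : g x = 0 := by
        rw [hfx, mul_zero, zero_add] at w1
        rcases mul_eq_zero.mp w1 with h' | h'
        · exact absurd h' (by simp [hlc, hac])
        · exact h'
      exact ⟨hfx, hgx⟩
    have hL01 : (0:ℝ) ∈ Set.Icc (0:ℝ) L := ⟨le_rfl, hL.le⟩
    have hLL : L ∈ Set.Icc (0:ℝ) L := ⟨hL.le, le_rfl⟩
    by_cases hg0 : g 0 = 0
    · exfalso
      have hf0 : f 0 = 0 := by rw [hb0, hg0, mul_zero]
      exact hker (by rw [hf0, hg0]; ring) (by rw [hf0, hg0]; ring)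
    by_cases hgL : g L = 0
    · exfalso
      have hfL : f L = 0 := by rw [hbL, hgL]
      have w1 := k1 L hLL; rw [hfL, hgL] at w1
      have w2 := k2 L hLL; rw [hfL, hgL] at w2
      have z1 : ((σ - (lam:ℂ)*μ₁) * f 0 + (a:ℂ)*(lam:ℂ) * g 0) * Complex.exp (μ₁*L) = 0 := by
        linear_combination -w1
      have z2 : ((σ - (lam:ℂ)*μ₂) * f 0 + (a:ℂ)*(lam:ℂ) * g 0) * Complex.exp (μ₂*L) = 0 := by
        linear_combination -w2
      apply hker
      · rcases mul_eq_zero.mp z1 with h'|h'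
        · exact h'
        · exact absurd h' (Complex.exp_ne_zero _)
      · rcases mul_eq_zero.mp z2 with h'|h'
        · exact h'
        · exact absurd h' (Complex.exp_ne_zero _)
    -- main case
    have w1L := k1 L hLL
    have w2L := k2 L hLL
    have hA1 : (((a:ℂ)*lam+Q)-(lam:ℂ)*η) * g L
        = ((σ - (lam:ℂ)*μ₁) * f 0 + (a:ℂ)*(lam:ℂ) * g 0) * Complex.exp (μ₁*L) := by
      linear_combination w1L - (σ - (lam:ℂ)*μ₁) * hbL - (g L) * hQ1
    have hA2 : (((a:ℂ)*lam+Q)+(lam:ℂ)*η) * g L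
        = ((σ - (lam:ℂ)*μ₂) * f 0 + (a:ℂ)*(lam:ℂ) * g 0) * Complex.exp (μ₂*L) := by
      linear_combination w2L - (σ - (lam:ℂ)*μ₂) * hbL - (g L) * hQ2
    have hC1 : (σ - (lam:ℂ)*μ₁) * f 0 + (a:ℂ)*(lam:ℂ) * g 0
        = (((a:ℂ)*lam+(k:ℂ)*Q)-(k:ℂ)*(lam:ℂ)*η) * g 0 := by
      linear_combination (σ - (lam:ℂ)*μ₁) * hb0 + ((k:ℂ) * g 0) * hQ1
    have hC2 : (σ - (lam:ℂ)*μ₂) * f 0 + (a:ℂ)*(lam:ℂ) * g 0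
        = (((a:ℂ)*lam+(k:ℂ)*Q)+(k:ℂ)*(lam:ℂ)*η) * g 0 := by
      linear_combination (σ - (lam:ℂ)*μ₂) * hb0 + ((k:ℂ) * g 0) * hQ2
    have hdz : ((((a:ℂ)*lam+k*Q)-k*(lam:ℂ)*η)*((((a:ℂ)*lam+Q))+(lam:ℂ)*η)*Complex.exp (μ₁*L)
        - (((a:ℂ)*lam+k*Q)+k*(lam:ℂ)*η)*((((a:ℂ)*lam+Q))-(lam:ℂ)*η)*Complex.exp (μ₂*L))
        * (g 0 * g L) = 0 := by
      linear_combination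
        (((((a:ℂ)*lam+(k:ℂ)*Q)-(k:ℂ)*(lam:ℂ)*η) * g 0) * Complex.exp (μ₁*L)) * hA2
        - (((((a:ℂ)*lam+(k:ℂ)*Q)+(k:ℂ)*(lam:ℂ)*η) * g 0) * Complex.exp (μ₂*L)) * hA1
        - (((σ - (lam:ℂ)*μ₂) * f 0 + (a:ℂ)*(lam:ℂ) * g 0)
            * Complex.exp (μ₂*L) * Complex.exp (μ₁*L)) * hC1
        + (((σ - (lam:ℂ)*μ₁) * f 0 + (a:ℂ)*(lam:ℂ) * g 0)
            * Complex.exp (μ₁*L) * Complex.exp (μ₂*L)) * hC2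
    have hdet0 : -2*(a:ℂ)*(lam:ℂ)^2*η*Complex.exp (s*L) * Fchar lam a b k L σ = 0 := by
      rw [← hdet]
      rcases mul_eq_zero.mp hdz with h' | h'
      · exact h'
      · exact absurd h' (mul_ne_zero hg0 hgL)
    have hne : -2*(a:ℂ)*(lam:ℂ)^2*η*Complex.exp (s*(L:ℂ)) ≠ 0 :=
      mul_ne_zero (mul_ne_zero (mul_ne_zero (mul_ne_zero (by norm_num) hac)
        (pow_ne_zero _ hlc)) hηne) (Complex.exp_ne_zero _)
    exact (mul_eq_zero.mp hdet0).resolve_left hne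
  · intro hFz
    set c₁ : ℂ := ((a:ℂ)*lam+(k:ℂ)*Q)-(k:ℂ)*(lam:ℂ)*η with hc1
    set c₂ : ℂ := ((a:ℂ)*lam+(k:ℂ)*Q)+(k:ℂ)*(lam:ℂ)*η with hc2
    set f : ℝ → ℂ :=
      fun x => (c₂ * Complex.exp (μ₂*x) - c₁ * Complex.exp (μ₁*x)) / (2*(lam:ℂ)*η) with hfdef
    set g : ℝ → ℂ := fun x =>
      ((σ-(lam:ℂ)*μ₂)*c₁*Complex.exp (μ₁*x) - (σ-(lam:ℂ)*μ₁)*c₂*Complex.exp (μ₂*x))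
        / (2*(a:ℂ)*(lam:ℂ)^2*η) with hgdef
    clear_value c₁ c₂
    have hderf : ∀ x : ℝ, HasDerivAt f
        ((c₂ * (μ₂ * Complex.exp (μ₂*x)) - c₁ * (μ₁ * Complex.exp (μ₁*x))) / (2*(lam:ℂ)*η)) x :=
      fun x => (((hasDerivAt_cexp_real μ₂ x).const_mul c₂).sub
        ((hasDerivAt_cexp_real μ₁ x).const_mul c₁)).div_const _
    have hderg : ∀ x : ℝ, HasDerivAt g
        (((σ-(lam:ℂ)*μ₂)*c₁ * (μ₁ * Complex.exp (μ₁*x))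
          - (σ-(lam:ℂ)*μ₁)*c₂ * (μ₂ * Complex.exp (μ₂*x))) / (2*(a:ℂ)*(lam:ℂ)^2*η)) x :=
      fun x => (((hasDerivAt_cexp_real μ₁ x).const_mul ((σ-(lam:ℂ)*μ₂)*c₁)).sub
        ((hasDerivAt_cexp_real μ₂ x).const_mul ((σ-(lam:ℂ)*μ₁)*c₂))).div_const _
    have hdf : Differentiable ℝ f := fun x => (hderf x).differentiableAt
    have hdg : Differentiable ℝ g := fun x => (hderg x).differentiableAt
    have hsum : (lam:ℂ)*(μ₁+μ₂) = σ*(1-(lam:ℂ)) := by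
      linear_combination (lam:ℂ)*hμ1 + (lam:ℂ)*hμ2 + hs'
    have hprod : (σ-(lam:ℂ)*μ₁)*(σ-(lam:ℂ)*μ₂) = (lam:ℂ)*a*b := by
      rw [hQ1, hQ2]
      linear_combination ((2*Q+σ*(1+(lam:ℂ)))/4)*hQ - (1/4 : ℂ)*hη2'
    have hg0 : g 0 = 1 := by
      rw [hgdef]
      simp only [Complex.ofReal_zero, mul_zero, Complex.exp_zero, mul_one]
      rw [hQ1, hQ2, hc1, hc2]
      field_simp
      ring
    have hf0 : f 0 = (k:ℂ) := by
      rw [hfdef]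
      simp only [Complex.ofReal_zero, mul_zero, Complex.exp_zero, mul_one]
      rw [hc1, hc2]
      field_simp
      ring
    refine ⟨f, g, hdf, hdg, ?_, ?_, ?_, ?_⟩
    · intro h
      have h2 := (h 0 ⟨le_rfl, hL.le⟩).2
      rw [hg0] at h2
      exact one_ne_zero h2
    · intro x hx
      constructor
      · rw [(hderf x).deriv, hfdef, hgdef]
        field_simp
        linear_combination
          (c₂ * Complex.exp (μ₂*x) - c₁ * Complex.exp ((x:ℂ)*μ₁)) * hsum
      · rw [(hderg x).deriv, hfdef, hgdef]
        field_simp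
        linear_combination
          (c₁ * Complex.exp (μ₁*x) - c₂ * Complex.exp (μ₂*x)) * hprod
    · rw [hfdef, hgdef]
      field_simp
      rw [mul_comm (L:ℂ) μ₁]
      linear_combination (-1 : ℂ) * hdet
        + (2*(a:ℂ)*(lam:ℂ)^2*η*Complex.exp (s*(L:ℂ))) * hFz
        + (c₂*Complex.exp (μ₂*(L:ℂ))) * hQ1
        - (c₁*Complex.exp (μ₁*(L:ℂ))) * hQ2
    · rw [hf0, hg0, mul_one]
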